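/- arXiv:1910.04238 — 5 statements merged into one kernel-verified Lean document; each statement's English description precedes it below -/
import Mathlib

section
/- Let M₁ = ℝ²∖{(0,0)} and let F : M₁ → M₁ be a bijection that is locally affine, i.e., every point of M₁ has an open neighborhood contained in M₁ on which F agrees with an affine map of ℝ². Then there exists an invertible linear map A : ℝ² → ℝ² such that F p = A p for all p ∈ M₁. Conversely, every invertible linear map of ℝ² restricts to such a bijection of M₁. (Hence the affine transformations of the once-punctured plane with the connection induced by ∇⁰ are exactly the restrictions of elements of GL₂(ℝ).) -/
noncomputable section

/-- `f` is locally affine on `U ⊆ ℝ²`: every point of `U` has an open neighborhood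
contained in `U` on which `f` agrees with an affine map `q ↦ A q + b` of `ℝ²`. -/
def LocallyAffineOn (U : Set (ℝ × ℝ)) (f : ℝ × ℝ → ℝ × ℝ) : Prop :=
  ∀ p ∈ U, ∃ V : Set (ℝ × ℝ), V ⊆ U ∧ IsOpen V ∧ p ∈ V ∧
    ∃ (A : (ℝ × ℝ) →ₗ[ℝ] ℝ × ℝ) (b : ℝ × ℝ), ∀ q ∈ V, f q = A q + b

/-- The once-punctured plane `M₁ = ℝ² ∖ {(0,0)}`. -/
def M₁ : Set (ℝ × ℝ) := {p | p ≠ (0, 0)}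

lemma affine_eq_of_eqOn {W : Set (ℝ×ℝ)} (hW : IsOpen W) (hne : W.Nonempty)
    {A A' : (ℝ×ℝ) →ₗ[ℝ] ℝ×ℝ} {b b' : ℝ×ℝ}
    (h : ∀ q ∈ W, A q + b = A' q + b') : A = A' ∧ b = b' := by
  obtain ⟨p, hp⟩ := hne
  obtain ⟨ε, hε, hball⟩ := Metric.isOpen_iff.1 hW p hp
  have key : ∀ v : ℝ × ℝ, A v = A' v := by
    intro v
    set t : ℝ := ε / (2 * (‖v‖ + 1)) with ht
    have hvpos : (0:ℝ) < ‖v‖ + 1 := by positivity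
    have htpos : 0 < t := by positivity
    have hmem : p + t • v ∈ W := by
      apply hball
      simp only [Metric.mem_ball, dist_eq_norm]
      have : ‖p + t • v - p‖ = t * ‖v‖ := by
        simp [norm_smul, abs_of_pos htpos]
      rw [this]
      calc t * ‖v‖ ≤ t * (‖v‖ + 1) := by nlinarith
        _ = ε / 2 := by rw [ht, div_mul_eq_mul_div, mul_comm (2:ℝ), ← div_div, mul_div_assoc, div_self hvpos.ne', mul_one]
        _ < ε := by linarith
    have h1 := h _ hmem
    have h2 := h _ hp
    simp only [map_add, map_smul] at h1
    have heq : t • A v = t • A' v := by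
      linear_combination (norm := module) h1 - h2
    exact smul_right_injective _ (ne_of_gt htpos) heq
  have hA : A = A' := LinearMap.ext key
  refine ⟨hA, ?_⟩
  have h2 := h _ hp
  rw [hA] at h2
  exact add_left_cancel h2

lemma M₁_eq : M₁ = {((0:ℝ),(0:ℝ))}ᶜ := by ext p; simp [M₁]

lemma M₁_preconnected : IsPreconnected M₁ := by
  rw [M₁_eq]
  refine (isConnected_compl_singleton_of_one_lt_rank ?_ _).isPreconnected
  have : Module.rank ℝ (ℝ × ℝ) = 2 := by
    rw [rank_prod']; simp; norm_num
  rw [this]; norm_num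

lemma M₁_open : IsOpen M₁ := by
  rw [M₁_eq]; exact isOpen_compl_singleton

/-- global affineness -/
lemma global_affine {F : ℝ × ℝ → ℝ × ℝ} (hF : LocallyAffineOn M₁ F) :
    ∃ (A : (ℝ × ℝ) →ₗ[ℝ] ℝ × ℝ) (b : ℝ × ℝ), ∀ p ∈ M₁, F p = A p + b := by
  have hp₀ : ((1:ℝ),(0:ℝ)) ∈ M₁ := by simp [M₁]
  obtain ⟨V₀, hV₀U, hV₀o, hpV₀, A₀, b₀, hA₀⟩ := hF _ hp₀
  refine ⟨A₀, b₀, ?_⟩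
  set S : Set (ℝ×ℝ) := {p | ∃ V : Set (ℝ×ℝ), V ⊆ M₁ ∧ IsOpen V ∧ p ∈ V ∧
    ∀ q ∈ V, F q = A₀ q + b₀} with hS
  have hSopen : IsOpen S := by
    refine isOpen_iff_forall_mem_open.2 ?_
    rintro p ⟨V, hVU, hVo, hpV, hVaff⟩
    exact ⟨V, fun q hq => ⟨V, hVU, hVo, hq, hVaff⟩, hVo, hpV⟩
  set T : Set (ℝ×ℝ) := M₁ \ S with hT
  have hTopen : IsOpen T := by
    refine isOpen_iff_forall_mem_open.2 ?_
    rintro p ⟨hpM, hpS⟩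
    obtain ⟨V, hVU, hVo, hpV, A, b, hVaff⟩ := hF p hpM
    refine ⟨V, ?_, hVo, hpV⟩
    intro q hq
    refine ⟨hVU hq, fun hqS => ?_⟩
    obtain ⟨V', hV'U, hV'o, hqV', hV'aff⟩ := hqS
    have hW : IsOpen (V ∩ V') := hVo.inter hV'o
    have hWne : (V ∩ V').Nonempty := ⟨q, hq, hqV'⟩
    have heq : ∀ r ∈ V ∩ V', A r + b = A₀ r + b₀ := by
      rintro r ⟨hr, hr'⟩
      rw [← hVaff r hr, hV'aff r hr']
    obtain ⟨hAe, hbe⟩ := affine_eq_of_eqOn hW hWne heq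
    exact hpS ⟨V, hVU, hVo, hpV, fun r hr => by rw [hVaff r hr, hAe, hbe]⟩
  have hsub : M₁ ⊆ S ∪ T := fun p hp => by
    by_cases h : p ∈ S
    · exact Or.inl h
    · exact Or.inr ⟨hp, h⟩
  have hSne : (M₁ ∩ S).Nonempty := ⟨_, hp₀, ⟨V₀, hV₀U, hV₀o, hpV₀, hA₀⟩⟩
  have hdisj : M₁ ∩ (S ∩ T) = ∅ := by
    ext p; simp only [Set.mem_inter_iff, Set.mem_empty_iff_false, iff_false]
    rintro ⟨_, hpS, _, hpT⟩; exact hpT hpS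
  have : ¬ (M₁ ∩ T).Nonempty := by
    intro hTne
    obtain ⟨x, hx⟩ := M₁_preconnected S T hSopen hTopen hsub hSne hTne
    rw [← Set.inter_assoc, Set.inter_assoc] at hx
    rw [hdisj] at hx
    exact hx
  intro p hp
  have hpS : p ∈ S := by
    rcases hsub hp with h | h
    · exact h
    · exact absurd ⟨p, hp, h⟩ this
  obtain ⟨V, _, _, hpV, hVaff⟩ := hpS
  exact hVaff p hpV

/-- Every locally affine bijection of `M₁ = ℝ²∖{(0,0)}` is the restriction of an
invertible linear map of `ℝ²`, and conversely every invertible linear map of `ℝ²`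
restricts to a locally affine bijection of `M₁`. -/
theorem affine_transformations_of_once_punctured_plane :
    (∀ F : ℝ × ℝ → ℝ × ℝ, Set.BijOn F M₁ M₁ → LocallyAffineOn M₁ F →
      ∃ A : (ℝ × ℝ) ≃ₗ[ℝ] ℝ × ℝ, ∀ p ∈ M₁, F p = A p) ∧
    (∀ A : (ℝ × ℝ) ≃ₗ[ℝ] ℝ × ℝ,
      Set.BijOn (fun p => A p) M₁ M₁ ∧ LocallyAffineOn M₁ (fun p => A p)) := by
  constructor
  · intro F hbij hloc
    obtain ⟨A, b, hAb⟩ := global_affine hloc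
    -- A injective
    have hinj : Function.Injective A := by
      rw [injective_iff_map_eq_zero]
      intro v hv
      by_contra hv0
      set w : ℝ × ℝ := (v.2, -v.1) with hw
      have hwne : w ≠ (0,0) := by
        intro h
        have h1 := congrArg Prod.fst h
        have h2 := congrArg Prod.snd h
        simp only [hw, neg_eq_zero] at h1 h2
        exact hv0 (Prod.ext h2 h1)
      have hwvne : w + v ≠ (0,0) := by
        intro h
        have h1 := congrArg Prod.fst h
        have h2 := congrArg Prod.snd h
        simp only [hw, Prod.fst_add, Prod.snd_add] at h1 h2
        have hv1 : v.1 = 0 := by linarith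
        have hv2 : v.2 = 0 := by linarith
        exact hv0 (Prod.ext hv1 hv2)
      have hwM : w ∈ M₁ := hwne
      have hwvM : w + v ∈ M₁ := hwvne
      have : F w = F (w + v) := by
        rw [hAb _ hwM, hAb _ hwvM, map_add, hv, add_zero]
      have := hbij.injOn hwM hwvM this
      apply hv0
      have : v = 0 := by
        have h := left_eq_add.mp this
        exact h
      simpa [Prod.ext_iff] using this
    have hsurj : Function.Surjective A :=
      LinearMap.injective_iff_surjective.mp hinj
    -- b = 0
    have hb : b = 0 := by
      by_contra hb0
      obtain ⟨q, hq⟩ := hsurj (-b)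
      have hqne : q ∈ M₁ := by
        intro h
        rw [show q = ((0:ℝ),(0:ℝ)) from h] at hq
        have h0 : A ((0:ℝ),(0:ℝ)) = (0:ℝ×ℝ) := map_zero A
        rw [h0] at hq
        exact hb0 (by simpa using hq.symm)
      have : F q ∈ M₁ := hbij.mapsTo hqne
      apply this
      rw [hAb _ hqne, hq, neg_add_cancel]
      rfl
    refine ⟨LinearEquiv.ofBijective A ⟨hinj, hsurj⟩, fun p hp => ?_⟩
    rw [hAb _ hp, hb, add_zero]
    rfl
  · intro A
    constructor
    · have h0 : ∀ p : ℝ × ℝ, (A p = 0 ↔ p = 0) := by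
        intro p
        constructor
        · intro h; have := A.injective (by simpa using h); simpa using this
        · intro h; simp [h]
      constructor
      · intro p hp h
        exact hp (by simpa [Prod.ext_iff] using (h0 p).1 h)
      constructor
      · intro p hp q hq h
        exact A.injective h
      · intro p hp
        refine ⟨A.symm p, ?_, by simp⟩
        intro h
        apply hp
        have : p = A ((0:ℝ),(0:ℝ)) := by
          rw [← h]; simp
        rw [this]
        simp only [show ((0:ℝ),(0:ℝ)) = (0 : ℝ × ℝ) from rfl, map_zero]
    · intro p hp
      exact ⟨M₁, le_refl _, M₁_open, hp, A.toLinearMap, 0, fun q _ => by simp⟩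
end
end

section
/- Let M₂ = ℝ²∖{(0,0),(0,1)} and let F : M₂ → M₂ be a bijection that is locally affine, i.e., every point of M₂ has an open neighborhood contained in M₂ on which F agrees with an affine map of ℝ². Then there exist real numbers a ≠ 0 and b such that either F(x,y) = (a x, b x + y) for all (x,y) ∈ M₂, or F(x,y) = (a x, b x − y + 1) for all (x,y) ∈ M₂. Conversely, every map of either of these two forms with a ≠ 0 is a locally affine bijection of M₂. -/
noncomputable section

/-- The twice-punctured plane `M₂ = ℝ² ∖ {(0,0), (0,1)}`. -/
def M₂ : Set (ℝ × ℝ) := {p | p ≠ (0, 0) ∧ p ≠ (0, 1)}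

lemma M₂_eq : M₂ = ({((0:ℝ),(0:ℝ)), ((0:ℝ),(1:ℝ))} : Set (ℝ × ℝ))ᶜ := by
  ext p; simp [M₂, not_or]

lemma isOpen_M₂ : IsOpen M₂ := by
  rw [M₂_eq]
  exact (Set.toFinite _).isClosed.isOpen_compl

lemma isPreconnected_M₂ : IsPreconnected M₂ := by
  rw [M₂_eq]
  have h : (1 : Cardinal) < Module.rank ℝ (ℝ × ℝ) := by
    rw [rank_prod', Module.rank_self]
    norm_num
  exact ((Set.toFinite _).countable.isPathConnected_compl_of_one_lt_rank h).isConnected.isPreconnected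

lemma affine_agree (A A' : (ℝ × ℝ) →ₗ[ℝ] ℝ × ℝ) (b b' : ℝ × ℝ) (W : Set (ℝ × ℝ))
    (hW : IsOpen W) (hne : W.Nonempty) (h : ∀ q ∈ W, A q + b = A' q + b') :
    ∀ q, A q + b = A' q + b' := by
  obtain ⟨q₀, hq₀⟩ := hne
  obtain ⟨ε, hε, hball⟩ := Metric.isOpen_iff.1 hW q₀ hq₀
  have key : ∀ v : ℝ × ℝ, A v = A' v := by
    intro v
    rcases eq_or_ne v 0 with rfl | hv
    · simp
    have hvn : 0 < ‖v‖ := norm_pos_iff.2 hv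
    set t : ℝ := ε / (2 * ‖v‖) with ht_def
    have ht : 0 < t := div_pos hε (by positivity)
    have hmem : q₀ + t • v ∈ W := by
      apply hball
      rw [Metric.mem_ball, dist_eq_norm]
      have : q₀ + t • v - q₀ = t • v := by abel
      rw [this, norm_smul, Real.norm_eq_abs, abs_of_pos ht]
      rw [ht_def]
      rw [div_mul_eq_mul_div, mul_comm, mul_div_assoc]
      calc ‖v‖ * (ε / (2 * ‖v‖)) = ε / 2 := by field_simp
        _ < ε := by linarith
    have h1 := h _ hmem
    have h2 := h _ hq₀
    rw [map_add, map_add, map_smul, map_smul] at h1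
    have h3 : t • A v = t • A' v := by
      have e1 : t • A v = (A q₀ + t • A v + b) - (A q₀ + b) := by abel
      rw [e1, h1, h2]; abel
    exact smul_right_injective (ℝ × ℝ) ht.ne' h3
  have hb : b = b' := by
    have := h q₀ hq₀
    rw [key q₀] at this
    exact add_left_cancel this
  intro q; rw [key q, hb]

/-- The linear map `(x,y) ↦ (a x, b x + c y)`. -/
def Lmap (a b c : ℝ) : (ℝ × ℝ) →ₗ[ℝ] ℝ × ℝ where
  toFun p := (a * p.1, b * p.1 + c * p.2)
  map_add' p q := by ext <;> simp <;> ring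
  map_smul' t p := by ext <;> simp <;> ring

lemma forward (F : ℝ × ℝ → ℝ × ℝ) (hbij : Set.BijOn F M₂ M₂) (hla : LocallyAffineOn M₂ F) :
    ∃ a b : ℝ, a ≠ 0 ∧
      ((∀ p ∈ M₂, F p = (a * p.1, b * p.1 + p.2)) ∨
       (∀ p ∈ M₂, F p = (a * p.1, b * p.1 - p.2 + 1))) := by
  have hp₀ : ((1:ℝ), (0:ℝ)) ∈ M₂ := by
    constructor <;> (intro h; rw [Prod.ext_iff] at h; norm_num at h)
  obtain ⟨V₀, hV₀U, hV₀o, hp₀V₀, A₀, b₀, hF₀⟩ := hla _ hp₀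
  -- the set where F agrees with A₀ q + b₀ locally
  set S : Set (ℝ × ℝ) := {p | ∃ V, IsOpen V ∧ p ∈ V ∧ ∀ q ∈ V, F q = A₀ q + b₀} with hS_def
  set T : Set (ℝ × ℝ) := {p | ∃ V : Set (ℝ × ℝ), ∃ A : (ℝ × ℝ) →ₗ[ℝ] ℝ × ℝ, ∃ b : ℝ × ℝ,
    IsOpen V ∧ p ∈ V ∧ (∀ q ∈ V, F q = A q + b) ∧ ∃ q, A q + b ≠ A₀ q + b₀} with hT_def
  have hSopen : IsOpen S := by
    rw [isOpen_iff_forall_mem_open]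
    rintro p ⟨V, hVo, hpV, hVF⟩
    exact ⟨V, fun q hq => ⟨V, hVo, hq, hVF⟩, hVo, hpV⟩
  have hTopen : IsOpen T := by
    rw [isOpen_iff_forall_mem_open]
    rintro p ⟨V, A, b, hVo, hpV, hVF, hne⟩
    exact ⟨V, fun q hq => ⟨V, A, b, hVo, hq, hVF, hne⟩, hVo, hpV⟩
  have hdisj : ∀ p, p ∈ S → p ∈ T → False := by
    rintro p ⟨V₁, hV₁o, hpV₁, hV₁F⟩ ⟨V₂, A, b, hV₂o, hpV₂, hV₂F, q, hq⟩
    have hW : IsOpen (V₁ ∩ V₂) := hV₁o.inter hV₂o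
    have hWne : (V₁ ∩ V₂).Nonempty := ⟨p, hpV₁, hpV₂⟩
    have hagree : ∀ r ∈ V₁ ∩ V₂, A r + b = A₀ r + b₀ := by
      rintro r ⟨hr₁, hr₂⟩
      rw [← hV₂F r hr₂, hV₁F r hr₁]
    exact hq (affine_agree A A₀ b b₀ _ hW hWne hagree q)
  have hcover : M₂ ⊆ S ∪ T := by
    intro p hp
    obtain ⟨V, _, hVo, hpV, A, b, hVF⟩ := hla p hp
    by_cases h : ∀ q, A q + b = A₀ q + b₀
    · exact Or.inl ⟨V, hVo, hpV, fun q hq => (hVF q hq).trans (h q)⟩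
    · push_neg at h
      exact Or.inr ⟨V, A, b, hVo, hpV, hVF, h⟩
  have hSne : ((1:ℝ), (0:ℝ)) ∈ S := ⟨V₀, hV₀o, hp₀V₀, hF₀⟩
  have hglob : ∀ p ∈ M₂, F p = A₀ p + b₀ := by
    intro p hp
    by_contra hcon
    have hpT : p ∈ T := by
      rcases hcover hp with hS | hT
      · obtain ⟨V, _, hpV, hVF⟩ := hS
        exact absurd (hVF p hpV) hcon
      · exact hT
    obtain ⟨r, hr⟩ := isPreconnected_M₂ S T hSopen hTopen hcover
      ⟨(1, 0), hp₀, hSne⟩ ⟨p, hp, hpT⟩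
    exact hdisj r hr.2.1 hr.2.2
  -- injectivity of A₀
  have hinj : Function.Injective A₀ := by
    rw [← LinearMap.ker_eq_bot, LinearMap.ker_eq_bot']
    intro v hv
    by_contra hv0
    have hfin : ({((0:ℝ),(0:ℝ)), ((0:ℝ),(1:ℝ)), ((0:ℝ),(0:ℝ)) - v, ((0:ℝ),(1:ℝ)) - v} :
        Set (ℝ × ℝ)).Finite := Set.toFinite _
    obtain ⟨p, hp⟩ := hfin.infinite_compl.nonempty
    simp only [Set.mem_compl_iff, Set.mem_insert_iff, Set.mem_singleton_iff, not_or] at hp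
    obtain ⟨hp1, hp2, hp3, hp4⟩ := hp
    have hpM : p ∈ M₂ := ⟨hp1, hp2⟩
    have hpvM : p + v ∈ M₂ := by
      constructor
      · intro h; exact hp3 (by rw [← h]; abel)
      · intro h; exact hp4 (by rw [← h]; abel)
    have hFeq : F p = F (p + v) := by
      rw [hglob p hpM, hglob _ hpvM, map_add, hv, add_zero]
    have := hbij.injOn hpM hpvM hFeq
    exact hv0 (by have := left_eq_add.mp this; exact this)
  have hGinj : Function.Injective (fun p : ℝ × ℝ => A₀ p + b₀) := by
    intro p q h
    exact hinj (add_right_cancel h)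
  -- complement preserved
  have hcompl : ∀ p : ℝ × ℝ, p ∉ M₂ → A₀ p + b₀ ∉ M₂ := by
    intro p hp hmem
    obtain ⟨q, hq, hFq⟩ := hbij.surjOn hmem
    have : q = p := hGinj (show A₀ q + b₀ = A₀ p + b₀ by rw [← hglob q hq]; exact hFq)
    exact hp (this ▸ hq)
  have hnm : ∀ p : ℝ × ℝ, p ∉ M₂ ↔ (p = (0,0) ∨ p = (0,1)) := by
    intro p
    simp [M₂, not_and_or, or_iff_not_imp_left]
  have h00 : ((0:ℝ),(0:ℝ)) ∉ M₂ := by rw [hnm]; left; rfl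
  have h01 : ((0:ℝ),(1:ℝ)) ∉ M₂ := by rw [hnm]; right; rfl
  have hb₀ : b₀ = (0,0) ∨ b₀ = (0,1) := by
    have := hcompl _ h00
    rw [hnm] at this
    simpa [Prod.mk_zero_zero] using this
  have hA01 : A₀ (0,1) + b₀ = (0,0) ∨ A₀ (0,1) + b₀ = (0,1) := by
    have := hcompl _ h01
    rw [hnm] at this
    exact this
  have hne01 : ((0:ℝ),(0:ℝ)) ≠ ((0:ℝ),(1:ℝ)) := by
    intro h; rw [Prod.ext_iff] at h; norm_num at h
  have himgne : A₀ (0,1) + b₀ ≠ b₀ := by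
    intro h
    have : ((0:ℝ),(1:ℝ)) = ((0:ℝ),(0:ℝ)) := hGinj (by simpa [Prod.mk_zero_zero] using h)
    exact hne01 this.symm
  -- decomposition of points
  have hdec : ∀ p : ℝ × ℝ, p = p.1 • ((1:ℝ),(0:ℝ)) + p.2 • ((0:ℝ),(1:ℝ)) := by
    intro p; ext <;> simp
  set a := (A₀ (1,0)).1 with ha_def
  set b := (A₀ (1,0)).2 with hb_def
  have hA10 : A₀ (1,0) = (a, b) := rfl
  refine ⟨a, b, ?_, ?_⟩
  · -- a ≠ 0 in both cases, derive later; restructure: we prove a ≠ 0 using injectivity and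
    -- the fact that A₀ (0,1) = (0,1) or (0,-1)
    intro ha0
    have hA01' : A₀ (0,1) = (0,1) ∨ A₀ (0,1) = (0,-1) := by
      rcases hb₀ with hb0 | hb1
      · rcases hA01 with h | h
        · exfalso; apply himgne; rw [h, hb0]
        · left; rw [hb0] at h; simpa [Prod.mk_zero_zero] using h
      · rcases hA01 with h | h
        · right; rw [hb1] at h
          have : A₀ (0,1) = ((0:ℝ),(0:ℝ)) - (0,1) := by rw [← h]; abel
          rw [this]; ext <;> simp
        · exfalso; apply himgne; rw [h, hb1]
    rcases hA01' with h | h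
    · -- A₀ (1, -b) = (0, b) - b•(0,1) = 0
      have : A₀ ((1:ℝ), -b) = 0 := by
        have e : ((1:ℝ), -b) = ((1:ℝ),(0:ℝ)) + (-b) • ((0:ℝ),(1:ℝ)) := by ext <;> simp
        rw [e, map_add, map_smul, h, hA10, ha0]
        ext <;> simp
      have := hinj (a₁ := ((1:ℝ), -b)) (a₂ := 0) (by simpa using this)
      rw [Prod.ext_iff] at this; norm_num at this
    · have : A₀ ((1:ℝ), b) = 0 := by
        have e : ((1:ℝ), b) = ((1:ℝ),(0:ℝ)) + b • ((0:ℝ),(1:ℝ)) := by ext <;> simp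
        rw [e, map_add, map_smul, h, hA10, ha0]
        ext <;> simp
      have := hinj (a₁ := ((1:ℝ), b)) (a₂ := 0) (by simpa using this)
      rw [Prod.ext_iff] at this; norm_num at this
  · rcases hb₀ with hb0 | hb1
    · -- b₀ = 0, A₀ (0,1) = (0,1)
      have hA01' : A₀ (0,1) = ((0:ℝ),(1:ℝ)) := by
        rcases hA01 with h | h
        · exfalso; apply himgne; rw [h, hb0]
        · rw [hb0] at h; simpa [Prod.mk_zero_zero] using h
      left
      intro p hp
      rw [hglob p hp, hb0]
      conv_lhs => rw [hdec p]
      rw [map_add, map_smul, map_smul, hA10, hA01']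
      ext <;> simp [mul_comm]
    · -- b₀ = (0,1), A₀ (0,1) = (0,-1)
      have hA01' : A₀ (0,1) = ((0:ℝ),(-1:ℝ)) := by
        rcases hA01 with h | h
        · rw [hb1] at h
          have : A₀ (0,1) = ((0:ℝ),(0:ℝ)) - (0,1) := by rw [← h]; abel
          rw [this]; ext <;> simp
        · exfalso; apply himgne; rw [h, hb1]
      right
      intro p hp
      rw [hglob p hp, hb1]
      conv_lhs => rw [hdec p]
      rw [map_add, map_smul, map_smul, hA10, hA01']
      ext <;> simp [mul_comm] <;> ring_nf

lemma Lmap_apply (a b c : ℝ) (p : ℝ × ℝ) : Lmap a b c p = (a * p.1, b * p.1 + c * p.2) := rfl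

lemma mem_M₂_iff (x y : ℝ) : (x, y) ∈ M₂ ↔ ¬(x = 0 ∧ y = 0) ∧ ¬(x = 0 ∧ y = 1) := by
  simp [M₂, Prod.ext_iff]

lemma converse1 (a b : ℝ) (ha : a ≠ 0) :
    Set.BijOn (fun p : ℝ × ℝ => (a * p.1, b * p.1 + p.2)) M₂ M₂ := by
  refine ⟨?_, ?_, ?_⟩
  · rintro ⟨x, y⟩ hp
    rw [mem_M₂_iff] at hp ⊢
    constructor
    · rintro ⟨hx, hy⟩
      have hx0 : x = 0 := by rcases mul_eq_zero.mp hx with h | h; exacts [absurd h ha, h]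
      subst hx0
      exact hp.1 ⟨rfl, by simp at hy; linarith⟩
    · rintro ⟨hx, hy⟩
      have hx0 : x = 0 := by rcases mul_eq_zero.mp hx with h | h; exacts [absurd h ha, h]
      subst hx0
      exact hp.2 ⟨rfl, by simp at hy; linarith⟩
  · rintro ⟨x, y⟩ _ ⟨x', y'⟩ _ h
    rw [Prod.ext_iff] at h
    obtain ⟨h1, h2⟩ := h
    simp only at h1 h2
    have hx : x = x' := mul_left_cancel₀ ha h1
    subst hx
    have hy : y = y' := by linarith
    rw [hy]
  · rintro ⟨x, y⟩ hq
    refine ⟨(x / a, y - b * (x / a)), ?_, ?_⟩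
    · rw [mem_M₂_iff] at hq ⊢
      constructor
      · rintro ⟨h1, h2⟩
        have hx0 : x = 0 := by field_simp at h1; simpa using h1
        subst hx0
        exact hq.1 ⟨rfl, by simp at h2; linarith⟩
      · rintro ⟨h1, h2⟩
        have hx0 : x = 0 := by field_simp at h1; simpa using h1
        subst hx0
        exact hq.2 ⟨rfl, by simp at h2; linarith⟩
    · show (a * (x / a), b * (x / a) + (y - b * (x / a))) = (x, y)
      rw [Prod.ext_iff]
      constructor
      · field_simp
      · ring
  
lemma converse2 (a b : ℝ) (ha : a ≠ 0) :
    Set.BijOn (fun p : ℝ × ℝ => (a * p.1, b * p.1 - p.2 + 1)) M₂ M₂ := by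
  refine ⟨?_, ?_, ?_⟩
  · rintro ⟨x, y⟩ hp
    rw [mem_M₂_iff] at hp ⊢
    constructor
    · rintro ⟨hx, hy⟩
      have hx0 : x = 0 := by rcases mul_eq_zero.mp hx with h | h; exacts [absurd h ha, h]
      subst hx0
      exact hp.2 ⟨rfl, by simp at hy; linarith⟩
    · rintro ⟨hx, hy⟩
      have hx0 : x = 0 := by rcases mul_eq_zero.mp hx with h | h; exacts [absurd h ha, h]
      subst hx0
      exact hp.1 ⟨rfl, by simp at hy; linarith⟩
  · rintro ⟨x, y⟩ _ ⟨x', y'⟩ _ h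
    rw [Prod.ext_iff] at h
    obtain ⟨h1, h2⟩ := h
    simp only at h1 h2
    have hx : x = x' := mul_left_cancel₀ ha h1
    subst hx
    have hy : y = y' := by linarith
    rw [hy]
  · rintro ⟨x, y⟩ hq
    refine ⟨(x / a, b * (x / a) - y + 1), ?_, ?_⟩
    · rw [mem_M₂_iff] at hq ⊢
      constructor
      · rintro ⟨h1, h2⟩
        have hx0 : x = 0 := by field_simp at h1; simpa using h1
        subst hx0
        exact hq.2 ⟨rfl, by simp at h2; linarith⟩
      · rintro ⟨h1, h2⟩
        have hx0 : x = 0 := by field_simp at h1; simpa using h1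
        subst hx0
        exact hq.1 ⟨rfl, by simp at h2; linarith⟩
    · show (a * (x / a), b * (x / a) - (b * (x / a) - y + 1) + 1) = (x, y)
      rw [Prod.ext_iff]
      constructor
      · field_simp
      · ring

lemma la1 (a b : ℝ) : LocallyAffineOn M₂ (fun p : ℝ × ℝ => (a * p.1, b * p.1 + p.2)) := by
  intro p hp
  refine ⟨M₂, subset_rfl, isOpen_M₂, hp, Lmap a b 1, (0, 0), ?_⟩
  intro q _
  rw [Lmap_apply, Prod.ext_iff]
  constructor <;> simp

lemma la2 (a b : ℝ) : LocallyAffineOn M₂ (fun p : ℝ × ℝ => (a * p.1, b * p.1 - p.2 + 1)) := by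
  intro p hp
  refine ⟨M₂, subset_rfl, isOpen_M₂, hp, Lmap a b (-1), (0, 1), ?_⟩
  intro q _
  rw [Lmap_apply, Prod.ext_iff]
  constructor
  · simp
  · show b * q.1 - q.2 + 1 = (b * q.1 + (-1) * q.2) + 1
    ring


/-- Every locally affine bijection of `M₂ = ℝ²∖{(0,0),(0,1)}` has the form
`(x,y) ↦ (ax, bx + y)` or `(x,y) ↦ (ax, bx − y + 1)` with `a ≠ 0`, and conversely every
map of one of these two forms is a locally affine bijection of `M₂`. -/
theorem affine_transformations_of_twice_punctured_plane :
    (∀ F : ℝ × ℝ → ℝ × ℝ, Set.BijOn F M₂ M₂ → LocallyAffineOn M₂ F →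
      ∃ a b : ℝ, a ≠ 0 ∧
        ((∀ p ∈ M₂, F p = (a * p.1, b * p.1 + p.2)) ∨
         (∀ p ∈ M₂, F p = (a * p.1, b * p.1 - p.2 + 1)))) ∧
    (∀ a b : ℝ, a ≠ 0 →
      (Set.BijOn (fun p : ℝ × ℝ => (a * p.1, b * p.1 + p.2)) M₂ M₂ ∧
        LocallyAffineOn M₂ (fun p : ℝ × ℝ => (a * p.1, b * p.1 + p.2))) ∧
      (Set.BijOn (fun p : ℝ × ℝ => (a * p.1, b * p.1 - p.2 + 1)) M₂ M₂ ∧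
        LocallyAffineOn M₂ (fun p : ℝ × ℝ => (a * p.1, b * p.1 - p.2 + 1)))) := by
  exact ⟨forward, fun a b ha => ⟨⟨converse1 a b ha, la1 a b⟩, ⟨converse2 a b ha, la2 a b⟩⟩⟩
end
end

section
/- Let X be an affine vector field on ℝ², i.e., X p = A p + b with A : ℝ² → ℝ² linear and b ∈ ℝ². Then X restricts to a complete vector field on U = ℝ²∖{(0,0)} if and only if b = 0, i.e., if and only if X is linear. Consequently the space of complete affine vector fields on ℝ²∖{(0,0)} is 4-dimensional, with linear basis x ∂/∂x, y ∂/∂x, x ∂/∂y, y ∂/∂y. -/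
open NormedSpace Set

set_option linter.unusedSectionVars false
set_option linter.unusedVariables false
set_option linter.unreachableTactic false
set_option linter.unusedTactic false
set_option linter.unnecessarySeqFocus false

noncomputable section

/-- A vector field `X` (restricted to an open set `U ⊆ ℝ²`) is complete if through every
point of `U` there is an integral curve of `X` defined on all of `ℝ` and staying in `U`. -/
def IsCompleteOn (U : Set (ℝ × ℝ)) (X : ℝ × ℝ → ℝ × ℝ) : Prop :=
  ∀ p ∈ U, ∃ γ : ℝ → ℝ × ℝ, γ 0 = p ∧ (∀ t : ℝ, γ t ∈ U) ∧
    ∀ t : ℝ, HasDerivAt γ (X (γ t)) t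

section Aux

variable {E : Type*} [NormedAddCommGroup E] [NormedSpace ℝ E] [CompleteSpace E]

lemma expFlow_hasDerivAt (A : E →L[ℝ] E) (p : E) (t : ℝ) :
    HasDerivAt (fun s : ℝ => exp (s • A) p) (A (exp (t • A) p)) t := by
  have h1 : HasDerivAt (fun s : ℝ => exp (s • A)) (A * exp (t • A)) t :=
    hasDerivAt_exp_smul_const' A t
  simpa using h1.clm_apply (hasDerivAt_const t p)

lemma expFlow_ne_zero (A : E →L[ℝ] E) {p : E} (hp : p ≠ 0) (t : ℝ) :
    exp (t • A) p ≠ 0 := by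
  intro h
  have hc : Commute (-(t • A)) (t • A) := (Commute.refl (t • A)).neg_left
  have h1 : exp (-(t • A)) * exp (t • A) = 1 := by
    rw [← exp_add_of_commute_of_mem_ball (𝕂 := ℝ) hc
      ((expSeries_radius_eq_top ℝ (E →L[ℝ] E)).symm ▸ edist_lt_top _ _)
      ((expSeries_radius_eq_top ℝ (E →L[ℝ] E)).symm ▸ edist_lt_top _ _)]; simp [exp_zero]
  apply hp
  calc p = (exp (-(t • A)) * exp (t • A)) p := by rw [h1]; simp
    _ = exp (-(t • A)) (exp (t • A) p) := rfl
    _ = 0 := by rw [h]; simp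

lemma complete_of_linear (A : (ℝ × ℝ) →ₗ[ℝ] ℝ × ℝ) (b : ℝ × ℝ) (hb : b = 0) :
    IsCompleteOn {p | p ≠ (0, 0)} (fun p => A p + b) := by
  subst hb
  intro p hp
  set A' : (ℝ × ℝ) →L[ℝ] ℝ × ℝ := A.toContinuousLinearMap with hA'
  refine ⟨fun s => exp (s • A') p, by simp [exp_zero], fun t => ?_, fun t => ?_⟩
  · have : p ≠ 0 := hp
    exact expFlow_ne_zero A' this t
  · have := expFlow_hasDerivAt A' p t
    simpa using (show HasDerivAt _ (A _) t from this)

/-- A solution through the origin of the affine ODE, via the linear lift to `(ℝ×ℝ) × ℝ`. -/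
lemma exists_sol_through_origin (A : (ℝ × ℝ) →ₗ[ℝ] ℝ × ℝ) (b : ℝ × ℝ) :
    ∃ σ : ℝ → ℝ × ℝ, σ 0 = (0, 0) ∧ ∀ t, HasDerivAt σ (A (σ t) + b) t := by
  set Bl : ((ℝ × ℝ) × ℝ) →ₗ[ℝ] ((ℝ × ℝ) × ℝ) :=
    LinearMap.prod
      (A.comp (LinearMap.fst ℝ (ℝ × ℝ) ℝ) +
        (LinearMap.toSpanSingleton ℝ (ℝ × ℝ) b).comp (LinearMap.snd ℝ (ℝ × ℝ) ℝ))
      0 with hBl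
  set B : ((ℝ × ℝ) × ℝ) →L[ℝ] ((ℝ × ℝ) × ℝ) := Bl.toContinuousLinearMap with hB
  have hBapp : ∀ q : (ℝ × ℝ) × ℝ, B q = (A q.1 + q.2 • b, 0) := fun q => rfl
  set Γ : ℝ → (ℝ × ℝ) × ℝ := fun s => exp (s • B) ((0, 0), 1) with hΓ
  have hΓd : ∀ t, HasDerivAt Γ (B (Γ t)) t := fun t => expFlow_hasDerivAt B _ t
  -- second component is constant 1
  have hz : ∀ t, (Γ t).2 = 1 := by
    have hdz : ∀ t, HasDerivAt (fun s => (Γ s).2) 0 t := by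
      intro t
      have := ((ContinuousLinearMap.snd ℝ (ℝ × ℝ) ℝ).hasFDerivAt).comp_hasDerivAt t (hΓd t)
      simpa [hBapp, Function.comp_def] using this
    have hconst : ∀ t, (Γ t).2 = (Γ 0).2 := by
      intro t
      have : ∀ x, deriv (fun s => (Γ s).2) x = 0 := fun x => (hdz x).deriv
      have hd : Differentiable ℝ (fun s => (Γ s).2) := fun x => (hdz x).differentiableAt
      have := is_const_of_deriv_eq_zero hd this t 0
      simpa using this
    intro t
    rw [hconst t, hΓ]
    simp [exp_zero]
  refine ⟨fun s => (Γ s).1, ?_, ?_⟩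
  · show (Γ 0).1 = (0, 0)
    rw [hΓ]; simp [exp_zero]
  · intro t
    have := ((ContinuousLinearMap.fst ℝ (ℝ × ℝ) ℝ).hasFDerivAt).comp_hasDerivAt t (hΓd t)
    simpa [hBapp, hz t, Function.comp_def] using this

lemma b_eq_zero (A : (ℝ × ℝ) →ₗ[ℝ] ℝ × ℝ) (b : ℝ × ℝ)
    (h : IsCompleteOn {p | p ≠ (0, 0)} (fun p => A p + b)) : b = 0 := by
  obtain ⟨σ, hσ0, hσd⟩ := exists_sol_through_origin A b
  by_cases hforall : ∀ t, σ t = (0, 0)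
  · -- then σ is constant, so its derivative is 0, hence b = 0
    have h1 : HasDerivAt σ 0 0 := by
      have : σ = fun _ => ((0 : ℝ), (0 : ℝ)) := funext hforall
      rw [this]; exact hasDerivAt_const _ _
    have h2 := (hσd 0).unique h1
    rw [hσ0] at h2
    have : A (0, 0) = 0 := by
      have : ((0 : ℝ), (0 : ℝ)) = (0 : ℝ × ℝ) := rfl
      rw [this, map_zero]
    rw [this, zero_add] at h2
    exact h2
  · exfalso
    push_neg at hforall
    obtain ⟨t₀, ht₀⟩ := hforall
    obtain ⟨γ, hγ0, hγU, hγd⟩ := h (σ t₀) ht₀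
    set η : ℝ → ℝ × ℝ := fun s => γ (s - t₀) with hη
    have hηd : ∀ t, HasDerivAt η (A (η t) + b) t := by
      intro t
      have hg : HasDerivAt (fun s : ℝ => s - t₀) 1 t := by
        simpa using (hasDerivAt_id t).sub_const t₀
      have := (hγd (t - t₀)).scomp t hg
      simpa [hη, Function.comp_def] using this
    set A' : (ℝ × ℝ) →L[ℝ] ℝ × ℝ := A.toContinuousLinearMap with hA'
    have hlip : ∀ t : ℝ, LipschitzOnWith ‖A'‖₊ (fun p : ℝ × ℝ => A p + b)
        (univ : Set (ℝ × ℝ)) := by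
      intro t
      apply LipschitzWith.lipschitzOnWith
      intro x y
      have : edist (A x + b) (A y + b) = edist (A' x) (A' y) := by
        rw [edist_add_right]; rfl
      rw [this]
      exact A'.lipschitz x y
    set a₁ : ℝ := -(|t₀| + 1) with ha₁
    set b₁ : ℝ := |t₀| + 1 with hb₁
    have ht₀mem : t₀ ∈ Ioo a₁ b₁ := by
      constructor <;>
        · simp only [ha₁, hb₁]
          cases' abs_lt.mp (show |t₀| < |t₀| + 1 by linarith) with h1 h2 <;> linarith
    have h0mem : (0 : ℝ) ∈ Ioo a₁ b₁ := by
      constructor <;> · simp only [ha₁, hb₁]; linarith [abs_nonneg t₀]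
    have heq : EqOn σ η (Ioo a₁ b₁) := by
      apply ODE_solution_unique_of_mem_Ioo (v := fun _ p => A p + b)
        (s := fun _ => (univ : Set (ℝ × ℝ))) (fun t _ => hlip t) ht₀mem
      · exact fun t _ => ⟨hσd t, trivial⟩
      · exact fun t _ => ⟨hηd t, trivial⟩
      · simp [hη, hγ0]
    have : σ 0 = η 0 := heq h0mem
    rw [hσ0] at this
    have h3 : γ (-t₀) = (0, 0) := by simpa [hη, zero_sub] using this.symm
    exact hγU (-t₀) h3

/-- The linear map sending a linear endomorphism of `ℝ²` to its underlying function. -/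
def Φ : ((ℝ × ℝ) →ₗ[ℝ] ℝ × ℝ) →ₗ[ℝ] ((ℝ × ℝ) → ℝ × ℝ) where
  toFun A := ⇑A
  map_add' A B := rfl
  map_smul' c A := rfl

lemma linind : LinearIndependent ℝ
      ![fun p : ℝ × ℝ => ((p.1, 0) : ℝ × ℝ), fun p : ℝ × ℝ => ((p.2, 0) : ℝ × ℝ),
        fun p : ℝ × ℝ => ((0, p.1) : ℝ × ℝ), fun p : ℝ × ℝ => ((0, p.2) : ℝ × ℝ)] := by
  rw [Fintype.linearIndependent_iff]
  intro g hg i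
  have h1 := congrFun hg ((1 : ℝ), (0 : ℝ))
  have h2 := congrFun hg ((0 : ℝ), (1 : ℝ))
  simp [Fin.sum_univ_four, Prod.ext_iff] at h1 h2
  fin_cases i <;> simp [h1, h2] <;> tauto

lemma span_eq_range : Submodule.span ℝ
        {fun p : ℝ × ℝ => ((p.1, 0) : ℝ × ℝ), fun p : ℝ × ℝ => ((p.2, 0) : ℝ × ℝ),
         fun p : ℝ × ℝ => ((0, p.1) : ℝ × ℝ), fun p : ℝ × ℝ => ((0, p.2) : ℝ × ℝ)}
      = LinearMap.range Φ := by
  apply le_antisymm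
  · rw [Submodule.span_le]
    rintro f (rfl | rfl | rfl | rfl)
    · exact ⟨(LinearMap.fst ℝ ℝ ℝ).prod 0, rfl⟩
    · exact ⟨(LinearMap.snd ℝ ℝ ℝ).prod 0, rfl⟩
    · exact ⟨(0 : (ℝ × ℝ) →ₗ[ℝ] ℝ).prod (LinearMap.fst ℝ ℝ ℝ), rfl⟩
    · exact ⟨(0 : (ℝ × ℝ) →ₗ[ℝ] ℝ).prod (LinearMap.snd ℝ ℝ ℝ), rfl⟩
  · rintro f ⟨A, rfl⟩
    have hdecomp : Φ A =
        (A (1, 0)).1 • (fun p : ℝ × ℝ => ((p.1, 0) : ℝ × ℝ)) +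
        (A (0, 1)).1 • (fun p : ℝ × ℝ => ((p.2, 0) : ℝ × ℝ)) +
        (A (1, 0)).2 • (fun p : ℝ × ℝ => ((0, p.1) : ℝ × ℝ)) +
        (A (0, 1)).2 • (fun p : ℝ × ℝ => ((0, p.2) : ℝ × ℝ)) := by
      funext p
      have hp : p = p.1 • ((1 : ℝ), (0 : ℝ)) + p.2 • ((0 : ℝ), (1 : ℝ)) := by
        simp [Prod.ext_iff]
      show A p = _
      rw [hp, map_add, map_smul, map_smul]
      simp [Prod.ext_iff, Prod.smul_def]
      constructor <;> ring
    rw [hdecomp]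
    have m1 : (fun p : ℝ × ℝ => ((p.1, 0) : ℝ × ℝ)) ∈ Submodule.span ℝ
        {fun p : ℝ × ℝ => ((p.1, 0) : ℝ × ℝ), fun p : ℝ × ℝ => ((p.2, 0) : ℝ × ℝ),
         fun p : ℝ × ℝ => ((0, p.1) : ℝ × ℝ), fun p : ℝ × ℝ => ((0, p.2) : ℝ × ℝ)} :=
      Submodule.subset_span (by simp)
    have m2 : (fun p : ℝ × ℝ => ((p.2, 0) : ℝ × ℝ)) ∈ Submodule.span ℝ
        {fun p : ℝ × ℝ => ((p.1, 0) : ℝ × ℝ), fun p : ℝ × ℝ => ((p.2, 0) : ℝ × ℝ),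
         fun p : ℝ × ℝ => ((0, p.1) : ℝ × ℝ), fun p : ℝ × ℝ => ((0, p.2) : ℝ × ℝ)} :=
      Submodule.subset_span (by simp)
    have m3 : (fun p : ℝ × ℝ => ((0, p.1) : ℝ × ℝ)) ∈ Submodule.span ℝ
        {fun p : ℝ × ℝ => ((p.1, 0) : ℝ × ℝ), fun p : ℝ × ℝ => ((p.2, 0) : ℝ × ℝ),
         fun p : ℝ × ℝ => ((0, p.1) : ℝ × ℝ), fun p : ℝ × ℝ => ((0, p.2) : ℝ × ℝ)} :=
      Submodule.subset_span (by simp)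
    have m4 : (fun p : ℝ × ℝ => ((0, p.2) : ℝ × ℝ)) ∈ Submodule.span ℝ
        {fun p : ℝ × ℝ => ((p.1, 0) : ℝ × ℝ), fun p : ℝ × ℝ => ((p.2, 0) : ℝ × ℝ),
         fun p : ℝ × ℝ => ((0, p.1) : ℝ × ℝ), fun p : ℝ × ℝ => ((0, p.2) : ℝ × ℝ)} :=
      Submodule.subset_span (by simp)
    exact Submodule.add_mem _ (Submodule.add_mem _ (Submodule.add_mem _
      (Submodule.smul_mem _ _ m1) (Submodule.smul_mem _ _ m2))
      (Submodule.smul_mem _ _ m3)) (Submodule.smul_mem _ _ m4)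

end Aux

/-- An affine vector field `X p = A p + b` on `ℝ²` restricts to a complete vector field on
`ℝ²∖{(0,0)}` if and only if `b = 0`, i.e. iff `X` is linear; consequently the complete
affine vector fields on `ℝ²∖{(0,0)}` form the 4-dimensional space with linear basis
`x ∂/∂x, y ∂/∂x, x ∂/∂y, y ∂/∂y`. -/
theorem complete_affine_vector_fields_once_punctured_plane :
    (∀ (A : (ℝ × ℝ) →ₗ[ℝ] ℝ × ℝ) (b : ℝ × ℝ),
      IsCompleteOn {p | p ≠ (0, 0)} (fun p => A p + b) ↔ b = 0) ∧
    LinearIndependent ℝ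
      ![fun p : ℝ × ℝ => ((p.1, 0) : ℝ × ℝ), fun p : ℝ × ℝ => ((p.2, 0) : ℝ × ℝ),
        fun p : ℝ × ℝ => ((0, p.1) : ℝ × ℝ), fun p : ℝ × ℝ => ((0, p.2) : ℝ × ℝ)] ∧
    {X : ℝ × ℝ → ℝ × ℝ |
        (∃ (A : (ℝ × ℝ) →ₗ[ℝ] ℝ × ℝ) (b : ℝ × ℝ), ∀ p, X p = A p + b) ∧
          IsCompleteOn {p | p ≠ (0, 0)} X} =
      ↑(Submodule.span ℝ
        {fun p : ℝ × ℝ => ((p.1, 0) : ℝ × ℝ), fun p : ℝ × ℝ => ((p.2, 0) : ℝ × ℝ),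
         fun p : ℝ × ℝ => ((0, p.1) : ℝ × ℝ), fun p : ℝ × ℝ => ((0, p.2) : ℝ × ℝ)}) := by
  refine ⟨fun A b => ⟨b_eq_zero A b, complete_of_linear A b⟩, linind, ?_⟩
  ext X
  simp only [Set.mem_setOf_eq, SetLike.mem_coe, span_eq_range]
  constructor
  · rintro ⟨⟨A, b, hX⟩, hc⟩
    have hXe : X = fun p => A p + b := funext hX
    have hb : b = 0 := b_eq_zero A b (hXe ▸ hc)
    exact ⟨A, (funext fun p => by rw [hX p, hb, add_zero]; rfl).symm⟩
  · rintro ⟨A, rfl⟩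
    refine ⟨⟨A, 0, fun p => by simp; rfl⟩, ?_⟩
    have hc := complete_of_linear A 0 rfl
    have he : (fun p => A p + 0) = Φ A := by funext p; simp; rfl
    rwa [he] at hc
end
end

section
/- Let X be an affine vector field on ℝ², i.e., X p = A p + b with A : ℝ² → ℝ² linear and b ∈ ℝ². Then X restricts to a complete vector field on U = ℝ²∖{(0,0),(0,1)} if and only if there exist real numbers a, c such that X(x,y) = (a x, c x) for all (x,y) ∈ ℝ². Consequently the space of complete affine vector fields on ℝ²∖{(0,0),(0,1)} is 2-dimensional, with linear basis x ∂/∂x, x ∂/∂y. -/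
noncomputable section

open Set

/-- Vector fields of the form `(x,y) ↦ (a x, c x)` are complete on the twice punctured plane. -/
lemma complete_form (a c : ℝ) :
    IsCompleteOn {p | p ≠ (0, 0) ∧ p ≠ (0, 1)} (fun p => (a * p.1, c * p.1)) := by
  intro p hp
  by_cases h : p.1 = 0
  · refine ⟨fun _ => p, rfl, fun _ => hp, fun t => ?_⟩
    have : ((a * p.1, c * p.1) : ℝ × ℝ) = 0 := by simp [h]
    simpa [this] using hasDerivAt_const t p
  · rcases eq_or_ne a 0 with ha | ha
    · refine ⟨fun t => (p.1, p.2 + c * p.1 * t), by simp, fun t => ?_, fun t => ?_⟩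
      · constructor <;> · intro hEq; exact h (by simpa using congrArg Prod.fst hEq)
      · have h1 : HasDerivAt (fun _ : ℝ => p.1) (0 : ℝ) t := hasDerivAt_const t p.1
        have h2 : HasDerivAt (fun t : ℝ => p.2 + c * p.1 * t) (c * p.1) t := by
          simpa using ((hasDerivAt_id t).const_mul (c * p.1)).const_add p.2
        have := h1.prodMk h2
        simp only [ha, zero_mul]
        exact this
    · refine ⟨fun t => (p.1 * Real.exp (a * t),
          p.2 + c * p.1 / a * (Real.exp (a * t) - 1)), by simp, fun t => ?_, fun t => ?_⟩
      · have hx : p.1 * Real.exp (a * t) ≠ 0 := mul_ne_zero h (Real.exp_ne_zero _)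
        constructor <;> · intro hEq; exact hx (by simpa using congrArg Prod.fst hEq)
      · have h0 : HasDerivAt (fun t : ℝ => a * t) a t := by
          simpa using (hasDerivAt_id t).const_mul a
        have h1 : HasDerivAt (fun t : ℝ => p.1 * Real.exp (a * t))
            (p.1 * (Real.exp (a * t) * a)) t := h0.exp.const_mul p.1
        have h2 : HasDerivAt (fun t : ℝ => p.2 + c * p.1 / a * (Real.exp (a * t) - 1))
            (c * p.1 / a * (Real.exp (a * t) * a)) t :=
          ((h0.exp.sub_const 1).const_mul (c * p.1 / a)).const_add p.2
        have := h1.prodMk h2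
        convert this using 2
        · ring
        · field_simp

/-- If an affine vector field is complete on the complement of two points,
it vanishes at the first of the two points. -/
lemma vanish (A : (ℝ × ℝ) →ₗ[ℝ] ℝ × ℝ) (b q q' : ℝ × ℝ) (hne : q ≠ q')
    (hc : IsCompleteOn {p | p ≠ q ∧ p ≠ q'} (fun p => A p + b)) : A q + b = 0 := by
  by_contra hX
  set X : ℝ × ℝ → ℝ × ℝ := fun p => A p + b with hXdef
  set A' := LinearMap.toContinuousLinearMap A with hA'
  have hXA' : X = fun p => A' p + b := by
    funext p; simp [hXdef, hA']
  have hcont : ContDiff ℝ 1 X := by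
    rw [hXA']; exact A'.contDiff.add contDiff_const
  have hlip : LipschitzWith ‖A'‖₊ X := fun p₁ p₂ => by
    simpa [hXA', edist_add_right] using A'.lipschitz p₁ p₂
  obtain ⟨α, hα0, ε, hε, hαd⟩ := ContDiffAt.exists_forall_mem_closedBall_exists_eq_forall_mem_Ioo_hasDerivAt₀
    (hcont.contDiffAt (x := q)) 0
  have hIoo : Ioo ((0:ℝ) - ε) (0 + ε) = Ioo (-ε) ε := by norm_num
  rw [hIoo] at hαd
  have h0mem : (0:ℝ) ∈ Ioo (-ε) ε := ⟨by linarith, hε⟩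
  -- α t ≠ q' for t near 0
  have hev : ∀ᶠ t in nhds (0:ℝ), α t ≠ q' := by
    have hca : ContinuousAt α 0 := (hαd 0 h0mem).continuousAt
    exact hca.eventually_ne (by rw [hα0]; exact hne)
  obtain ⟨δ, hδ, hδ'⟩ := Metric.eventually_nhds_iff.mp hev
  set δ₀ := min ε δ with hδ₀
  have hδ₀pos : 0 < δ₀ := lt_min hε hδ
  by_cases hconst : ∀ t ∈ Ioo (0:ℝ) δ₀, α t = q
  · -- α constant near a point forces X q = 0
    have htmem : δ₀ / 2 ∈ Ioo (0:ℝ) δ₀ := ⟨by linarith, by linarith⟩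
    have hev2 : α =ᶠ[nhds (δ₀ / 2)] fun _ => q :=
      Filter.eventuallyEq_of_mem (isOpen_Ioo.mem_nhds htmem) hconst
    have h1 : HasDerivAt α 0 (δ₀ / 2) :=
      (hasDerivAt_const (δ₀ / 2) q).congr_of_eventuallyEq hev2
    have h2 : HasDerivAt α (X (α (δ₀ / 2))) (δ₀ / 2) :=
      hαd _ ⟨by linarith, lt_of_lt_of_le htmem.2 (min_le_left _ _)⟩
    rw [hconst _ htmem] at h2
    exact hX (h1.unique h2).symm
  · push_neg at hconst
    obtain ⟨t₀, ht₀, hαt₀⟩ := hconst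
    have ht₀ε : t₀ < ε := lt_of_lt_of_le ht₀.2 (min_le_left _ _)
    have hαt₀' : α t₀ ≠ q' := by
      apply hδ'
      simp only [Real.dist_eq, sub_zero]
      rw [abs_of_pos ht₀.1]
      exact lt_of_lt_of_le ht₀.2 (min_le_right _ _)
    obtain ⟨γ, hγ0, hγmem, hγd⟩ := hc (α t₀) ⟨hαt₀, hαt₀'⟩
    set g : ℝ → ℝ × ℝ := fun t => γ (t - t₀) with hg
    have hgd : ∀ t : ℝ, HasDerivAt g (X (g t)) t := by
      intro t
      have := HasDerivAt.scomp (𝕜 := ℝ) t (hγd (t - t₀)) ((hasDerivAt_id t).sub_const t₀)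
      simpa [hg, Function.comp_def] using this
    have huniq : EqOn α g (Ioo (-ε) ε) := by
      refine ODE_solution_unique_of_mem_Ioo (v := fun _ => X) (s := fun _ => univ)
        (K := ‖A'‖₊) (fun _ _ => hlip.lipschitzOnWith) (a := -ε) (b := ε) (t₀ := t₀)
        ⟨by linarith [ht₀.1], ht₀ε⟩ (fun t ht => ⟨hαd t ht, mem_univ _⟩)
        (fun t ht => ⟨hgd t, mem_univ _⟩) ?_
      simp [hg, hγ0]
    have : α 0 = γ (-t₀) := by simpa [hg] using huniq h0mem
    have hq : γ (-t₀) = q := by rw [← this, hα0]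
    exact (hγmem (-t₀)).1 hq

/-- Main characterization: an affine vector field is complete on the twice punctured plane
iff it has the form `(x,y) ↦ (a x, c x)`. -/
lemma key (A : (ℝ × ℝ) →ₗ[ℝ] ℝ × ℝ) (b : ℝ × ℝ) :
    IsCompleteOn {p | p ≠ (0, 0) ∧ p ≠ (0, 1)} (fun p => A p + b) ↔
      ∃ a c : ℝ, ∀ p : ℝ × ℝ, A p + b = (a * p.1, c * p.1) := by
  constructor
  · intro hc
    have hne : ((0:ℝ), (0:ℝ)) ≠ ((0:ℝ), (1:ℝ)) := by simp [Prod.ext_iff]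
    have h1 : A (0, 0) + b = 0 := vanish A b (0, 0) (0, 1) hne hc
    have hU : {p : ℝ × ℝ | p ≠ (0, 0) ∧ p ≠ (0, 1)} = {p | p ≠ (0, 1) ∧ p ≠ (0, 0)} := by
      ext p; exact and_comm
    have h2 : A (0, 1) + b = 0 := vanish A b (0, 1) (0, 0) hne.symm (hU ▸ hc)
    have hb : b = 0 := by
      have : ((0:ℝ), (0:ℝ)) = (0 : ℝ × ℝ) := rfl
      rw [this, map_zero, zero_add] at h1; exact h1
    have hA01 : A (0, 1) = 0 := by rw [hb, add_zero] at h2; exact h2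
    refine ⟨(A (1, 0)).1, (A (1, 0)).2, fun p => ?_⟩
    have hp : (p : ℝ × ℝ) = p.1 • ((1, 0) : ℝ × ℝ) + p.2 • ((0, 1) : ℝ × ℝ) := by
      simp [Prod.ext_iff]
    rw [hb, add_zero, hp, map_add, map_smul, map_smul, hA01, smul_zero, add_zero]
    simp [Prod.ext_iff, mul_comm]
  · rintro ⟨a, c, h⟩
    have e : (fun p : ℝ × ℝ => A p + b) = fun p => ((a * p.1, c * p.1) : ℝ × ℝ) := funext h
    rw [e]
    exact complete_form a c

/-- An affine vector field `X p = A p + b` on `ℝ²` restricts to a complete vector field on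
`ℝ²∖{(0,0),(0,1)}` if and only if `X (x,y) = (a x, c x)` for some reals `a, c`;
consequently the complete affine vector fields on `ℝ²∖{(0,0),(0,1)}` form the
2-dimensional space with linear basis `x ∂/∂x, x ∂/∂y`. -/
theorem complete_affine_vector_fields_twice_punctured_plane :
    (∀ (A : (ℝ × ℝ) →ₗ[ℝ] ℝ × ℝ) (b : ℝ × ℝ),
      IsCompleteOn {p | p ≠ (0, 0) ∧ p ≠ (0, 1)} (fun p => A p + b) ↔
        ∃ a c : ℝ, ∀ p : ℝ × ℝ, A p + b = (a * p.1, c * p.1)) ∧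
    LinearIndependent ℝ
      ![fun p : ℝ × ℝ => ((p.1, 0) : ℝ × ℝ), fun p : ℝ × ℝ => ((0, p.1) : ℝ × ℝ)] ∧
    {X : ℝ × ℝ → ℝ × ℝ |
        (∃ (A : (ℝ × ℝ) →ₗ[ℝ] ℝ × ℝ) (b : ℝ × ℝ), ∀ p, X p = A p + b) ∧
          IsCompleteOn {p | p ≠ (0, 0) ∧ p ≠ (0, 1)} X} =
      ↑(Submodule.span ℝ
        {fun p : ℝ × ℝ => ((p.1, 0) : ℝ × ℝ), fun p : ℝ × ℝ => ((0, p.1) : ℝ × ℝ)}) := by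
  refine ⟨key, ?_, ?_⟩
  · rw [linearIndependent_fin2]
    constructor
    · intro hcon
      have := congrFun hcon ((1 : ℝ), (0 : ℝ))
      simp [Prod.ext_iff] at this
    · intro r hcon
      have := congrFun hcon ((1 : ℝ), (0 : ℝ))
      simp [Prod.ext_iff] at this
  · ext X
    simp only [Set.mem_setOf_eq, SetLike.mem_coe, Submodule.mem_span_pair]
    constructor
    · rintro ⟨⟨A, b, hAb⟩, hcomp⟩
      have hX : (fun p => A p + b) = X := funext fun p => (hAb p).symm
      obtain ⟨a, c, h⟩ := (key A b).1 (hX ▸ hcomp)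
      refine ⟨a, c, funext fun p => ?_⟩
      simp only [Pi.add_apply, Pi.smul_apply, Prod.smul_mk, smul_eq_mul, mul_one, mul_zero,
        Prod.mk_add_mk, add_zero, zero_add, hAb p, h p]
    · rintro ⟨a, c, hX⟩
      have hXval : ∀ p : ℝ × ℝ, X p = (a * p.1, c * p.1) := by
        intro p
        rw [← hX]
        simp [Prod.ext_iff]
      constructor
      · refine ⟨LinearMap.prod (a • LinearMap.fst ℝ ℝ ℝ) (c • LinearMap.fst ℝ ℝ ℝ), 0,
          fun p => ?_⟩
        simp [hXval p, Prod.ext_iff]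
      · have e : X = fun p : ℝ × ℝ => ((a * p.1, c * p.1) : ℝ × ℝ) := funext hXval
        rw [e]
        exact complete_form a c
end
end

section
/- On the open half-plane U = {(x,y) ∈ ℝ² : x > 0}, consider the vector fields C₃(x,y) = (1/x, 0), C₄(x,y) = (y/x, 0), C₅(x,y) = (x + y²/x, 0), and C₆(x,y) = (−x y − y³/x, x² + y²). For every (α₃, α₄, α₅, α₆) ∈ ℝ⁴ with (α₃, α₄, α₅, α₆) ≠ (0,0,0,0), the vector field V = α₃ C₃ + α₄ C₄ + α₅ C₅ + α₆ C₆ is not complete on U: there exists a point p ∈ U for which there is no curve γ : ℝ → ℝ² with γ 0 = p, γ t ∈ U for all t ∈ ℝ, and γ'(t) = V(γ t) for all t ∈ ℝ. -/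
noncomputable section

/-- The vector field `α₃ C₃ + α₄ C₄ + α₅ C₅ + α₆ C₆` on the half-plane `x > 0`, where
`C₃(x,y) = (1/x, 0)`, `C₄(x,y) = (y/x, 0)`, `C₅(x,y) = (x + y²/x, 0)` and
`C₆(x,y) = (−xy − y³/x, x² + y²)`. -/
def Vfield (α₃ α₄ α₅ α₆ : ℝ) : ℝ × ℝ → ℝ × ℝ := fun p =>
  (α₃ * (1 / p.1) + α₄ * (p.2 / p.1) + α₅ * (p.1 + p.2 ^ 2 / p.1) +
      α₆ * (-(p.1 * p.2) - p.2 ^ 3 / p.1),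
    α₆ * (p.1 ^ 2 + p.2 ^ 2))

/-- A Riccati-type comparison: if `v' = c·u` with `c > 0`, `u > v²` and `v 0 > 0`, then
`v` cannot be defined (with these properties) on all of `ℝ`. -/
lemma riccati_blowup (c : ℝ) (hc : 0 < c) (u v : ℝ → ℝ)
    (hderiv : ∀ t, HasDerivAt v (c * u t) t)
    (hu : ∀ t, (v t) ^ 2 < u t) (h0 : 0 < v 0) : False := by
  have hupos : ∀ t, 0 < u t := fun t => lt_of_le_of_lt (sq_nonneg _) (hu t)
  have hmono : StrictMono v := strictMono_of_deriv_pos fun t => by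
    rw [(hderiv t).deriv]; exact mul_pos hc (hupos t)
  have hvpos : ∀ t : ℝ, 0 ≤ t → 0 < v t :=
    fun t ht => lt_of_lt_of_le h0 (hmono.monotone ht)
  set g : ℝ → ℝ := fun t => -(v t)⁻¹ - c * t with hg
  have hgd : ∀ t : ℝ, 0 ≤ t → HasDerivAt g (c * u t / (v t) ^ 2 - c) t := by
    intro t ht
    have h1 := ((hderiv t).inv (hvpos t ht).ne').neg
    have h2 := h1.sub ((hasDerivAt_id t).const_mul c)
    refine h2.congr_deriv ?_
    ring
  have hgmono : StrictMonoOn g (Set.Ici 0) := by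
    apply strictMonoOn_of_deriv_pos (convex_Ici 0)
    · exact fun t ht => ((hgd t ht).differentiableAt).continuousAt.continuousWithinAt
    · intro t ht
      rw [interior_Ici] at ht
      rw [(hgd t ht.le).deriv]
      have hv2 : 0 < (v t) ^ 2 := pow_pos (hvpos t ht.le) 2
      rw [sub_pos, lt_div_iff₀ hv2]
      have := hu t
      nlinarith
  set T : ℝ := 1 / (c * v 0) + 1 with hT
  have hTpos : (0:ℝ) < T := by positivity
  have hlt : g 0 < g T := hgmono Set.self_mem_Ici (le_of_lt hTpos) hTpos
  have hvT := hvpos T hTpos.le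
  have e1 : (0:ℝ) < (v T)⁻¹ := by positivity
  have e2 : c * T = (v 0)⁻¹ + c := by
    rw [hT]; field_simp
  simp only [hg] at hlt
  rw [mul_zero, sub_zero, e2] at hlt
  nlinarith

/-- Extract the first coordinate of a vector-valued derivative. -/
lemma hasDerivAt_fst {γ : ℝ → ℝ × ℝ} {d : ℝ × ℝ} {t : ℝ} (h : HasDerivAt γ d t) :
    HasDerivAt (fun s => (γ s).1) d.1 t := by
  simpa using h.hasFDerivAt.fst.hasDerivAt

/-- Extract the second coordinate of a vector-valued derivative. -/
lemma hasDerivAt_snd {γ : ℝ → ℝ × ℝ} {d : ℝ × ℝ} {t : ℝ} (h : HasDerivAt γ d t) :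
    HasDerivAt (fun s => (γ s).2) d.2 t := by
  simpa using h.hasFDerivAt.snd.hasDerivAt

/-- No nonzero real linear combination of the vector fields `C₃, C₄, C₅, C₆` is complete
on the half-plane `U = {(x,y) : x > 0}`: there is a point of `U` through which no integral
curve defined on all of `ℝ` stays in `U`. -/
theorem no_nonzero_combination_is_complete (α₃ α₄ α₅ α₆ : ℝ)
    (h : ¬(α₃ = 0 ∧ α₄ = 0 ∧ α₅ = 0 ∧ α₆ = 0)) :
    ∃ p ∈ {q : ℝ × ℝ | 0 < q.1},
      ¬∃ γ : ℝ → ℝ × ℝ, γ 0 = p ∧ (∀ t : ℝ, γ t ∈ {q : ℝ × ℝ | 0 < q.1}) ∧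
        ∀ t : ℝ, HasDerivAt γ (Vfield α₃ α₄ α₅ α₆ (γ t)) t := by
  by_cases h6 : α₆ = 0
  · -- `α₆ = 0` : along any integral curve `y` is constant and `(x²)' = 2α₅ x² + 2c₀`.
    subst h6
    by_cases h5 : α₅ = 0
    · -- `α₅ = α₆ = 0` : `(x²)' = 2(α₃ + α₄ y₀)` is a nonzero constant for suitable `y₀`.
      subst h5
      have hex : ∃ y₀ : ℝ, α₃ + α₄ * y₀ ≠ 0 := by
        by_contra hcon
        push_neg at hcon
        have h1 := hcon 0
        have h2 := hcon 1
        exact h ⟨by linarith, by linarith, rfl, rfl⟩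
      obtain ⟨y₀, hy₀⟩ := hex
      refine ⟨(1, y₀), by norm_num [Set.mem_setOf_eq], ?_⟩
      rintro ⟨γ, h0, hU, hd⟩
      have hx : ∀ t, 0 < (γ t).1 := fun t => hU t
      have hy : ∀ t, (γ t).2 = y₀ := by
        have hdy : ∀ t, HasDerivAt (fun s => (γ s).2) 0 t := by
          intro t
          have := hasDerivAt_snd (hd t)
          simpa [Vfield] using this
        intro t
        have := is_const_of_deriv_eq_zero (fun s => (hdy s).differentiableAt)
          (fun s => (hdy s).deriv) t 0
        rw [this, h0]
      have hw : ∀ t, HasDerivAt (fun s => (γ s).1 ^ 2) (2 * (α₃ + α₄ * y₀)) t := by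
        intro t
        have h1 : HasDerivAt (fun s => (γ s).1) ((Vfield α₃ α₄ 0 0 (γ t)).1) t :=
          hasDerivAt_fst (hd t)
        have h2 := h1.pow 2
        refine h2.congr_deriv ?_
        have hxne := (hx t).ne'
        simp only [Vfield, hy t]
        field_simp
        ring
      -- hence `x(t)² = 1 + 2(α₃+α₄y₀) t`, which vanishes at finite time
      set c₀ : ℝ := α₃ + α₄ * y₀ with hc₀
      have hG : ∀ t, HasDerivAt (fun s => (γ s).1 ^ 2 - 2 * c₀ * s) 0 t := by
        intro t
        have := (hw t).sub ((hasDerivAt_id t).const_mul (2 * c₀))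
        refine this.congr_deriv ?_
        ring
      set t₀ : ℝ := -1 / (2 * c₀) with ht₀
      have hconst := is_const_of_deriv_eq_zero (fun s => (hG s).differentiableAt)
        (fun s => (hG s).deriv) t₀ 0
      have hw0 : (γ 0).1 ^ 2 = 1 := by rw [h0]; norm_num
      have hzero : (γ t₀).1 ^ 2 = 0 := by
        simp only [hw0, mul_zero, sub_zero] at hconst
        rw [ht₀] at hconst ⊢
        field_simp at hconst ⊢
        linarith
      exact (pow_pos (hx t₀) 2).ne' hzero
    · -- `α₅ ≠ 0, α₆ = 0` : `(x²)' = 2α₅ x² + 2c₀` with `c₀ ≠ 0` for suitable `y₀`.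
      have hex : ∃ y₀ : ℝ, α₃ + α₄ * y₀ + α₅ * y₀ ^ 2 ≠ 0 := by
        by_contra hcon
        push_neg at hcon
        have h1 := hcon 0
        have h2 := hcon 1
        have h3 := hcon (-1)
        norm_num at h1 h2 h3
        exact h5 (by linarith)
      obtain ⟨y₀, hc₀⟩ := hex
      set c₀ : ℝ := α₃ + α₄ * y₀ + α₅ * y₀ ^ 2 with hc₀def
      set m : ℝ := c₀ / α₅ with hmdef
      have hm : m ≠ 0 := div_ne_zero hc₀ h5
      have hma : α₅ * m = c₀ := by rw [hmdef]; field_simp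
      obtain ⟨w0, r, hw0pos, hr, hwr⟩ :
          ∃ w0 r : ℝ, 0 < w0 ∧ 0 < r ∧ (w0 + m) * r = m := by
        rcases hm.lt_or_gt with hmn | hmp
        · exact ⟨-m / 2, 2, by linarith, by norm_num, by ring⟩
        · exact ⟨m, 1 / 2, hmp, by norm_num, by ring⟩
      refine ⟨(Real.sqrt w0, y₀), by simpa [Set.mem_setOf_eq] using Real.sqrt_pos.mpr hw0pos, ?_⟩
      rintro ⟨γ, h0, hU, hd⟩
      have hx : ∀ t, 0 < (γ t).1 := fun t => hU t
      have hy : ∀ t, (γ t).2 = y₀ := by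
        have hdy : ∀ t, HasDerivAt (fun s => (γ s).2) 0 t := by
          intro t
          have := hasDerivAt_snd (hd t)
          simpa [Vfield] using this
        intro t
        have := is_const_of_deriv_eq_zero (fun s => (hdy s).differentiableAt)
          (fun s => (hdy s).deriv) t 0
        rw [this, h0]
      have hw : ∀ t, HasDerivAt (fun s => (γ s).1 ^ 2)
          (2 * α₅ * (γ t).1 ^ 2 + 2 * c₀) t := by
        intro t
        have h1 : HasDerivAt (fun s => (γ s).1) ((Vfield α₃ α₄ α₅ 0 (γ t)).1) t :=
          hasDerivAt_fst (hd t)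
        have h2 := h1.pow 2
        refine h2.congr_deriv ?_
        have hxne := (hx t).ne'
        simp only [Vfield, hy t, hc₀def]
        field_simp
        ring
      -- the quantity `(x² + m)·exp(−2α₅ t)` is conserved
      have hF : ∀ t, HasDerivAt
          (fun s => ((γ s).1 ^ 2 + m) * Real.exp (-(2 * α₅) * s)) 0 t := by
        intro t
        have h1 := (hw t).add_const m
        have h2 : HasDerivAt (fun s : ℝ => Real.exp (-(2 * α₅) * s))
            (Real.exp (-(2 * α₅) * t) * (-(2 * α₅))) t := by
          simpa using ((hasDerivAt_id t).const_mul (-(2 * α₅))).exp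
        have h3 := h1.mul h2
        refine h3.congr_deriv ?_
        have := hma
        nlinarith [Real.exp_pos (-(2 * α₅) * t), hma]
      set t₀ : ℝ := Real.log r / (2 * α₅) with ht₀
      have hconst := is_const_of_deriv_eq_zero (fun s => (hF s).differentiableAt)
        (fun s => (hF s).deriv) t₀ 0
      have hw00 : (γ 0).1 ^ 2 = w0 := by rw [h0]; exact Real.sq_sqrt hw0pos.le
      have hexp : Real.exp (-(2 * α₅) * t₀) = r⁻¹ := by
        rw [ht₀]
        have h2a : (2 * α₅) ≠ 0 := by simpa using h5
        rw [show -(2 * α₅) * (Real.log r / (2 * α₅)) = -Real.log r by field_simp]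
        rw [Real.exp_neg, Real.exp_log hr]
      rw [hexp, hw00, mul_zero, Real.exp_zero, mul_one] at hconst
      have hzero : (γ t₀).1 ^ 2 = 0 := by
        have hrne := hr.ne'
        have : ((γ t₀).1 ^ 2 + m) = (w0 + m) * r := by
          field_simp at hconst
          linarith [hconst]
        nlinarith [hwr, this]
      exact (pow_pos (hx t₀) 2).ne' hzero
  · -- `α₆ ≠ 0` : `y' = α₆ (x² + y²)` forces Riccati blow-up
    rcases (lt_or_gt_of_ne h6) with hneg | hpos
    · refine ⟨(1, -1), by norm_num [Set.mem_setOf_eq], ?_⟩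
      rintro ⟨γ, h0, hU, hd⟩
      refine riccati_blowup (-α₆) (by linarith) (fun t => (γ t).1 ^ 2 + (γ t).2 ^ 2)
        (fun t => -(γ t).2) ?_ ?_ ?_
      · intro t
        have := (hasDerivAt_snd (hd t)).neg
        simp only [Vfield] at this
        refine this.congr_deriv ?_
        ring
      · intro t
        have := hU t
        simp only [Set.mem_setOf_eq] at this
        show (-(γ t).2) ^ 2 < (γ t).1 ^ 2 + (γ t).2 ^ 2
        nlinarith [pow_pos this 2]
      · show (0:ℝ) < -(γ 0).2
        rw [h0]; norm_num
    · refine ⟨(1, 1), by norm_num [Set.mem_setOf_eq], ?_⟩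
      rintro ⟨γ, h0, hU, hd⟩
      refine riccati_blowup α₆ hpos (fun t => (γ t).1 ^ 2 + (γ t).2 ^ 2)
        (fun t => (γ t).2) ?_ ?_ ?_
      · intro t
        have := hasDerivAt_snd (hd t)
        simpa [Vfield] using this
      · intro t
        have := hU t
        simp only [Set.mem_setOf_eq] at this
        show ((γ t).2) ^ 2 < (γ t).1 ^ 2 + (γ t).2 ^ 2
        nlinarith [pow_pos this 2]
      · show (0:ℝ) < (γ 0).2
        rw [h0]; norm_num
end
end
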